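/- Let r ≥ 1 be a real number and let u, ũ, v, ṽ be nonnegative real numbers. Then (v u^{r−1} − ṽ ũ^{r−1})(u − ũ) ≥ (1/r)(u^r − ũ^r)(v − ṽ). -/

import Mathlib

lemma young_aux (r a b : ℝ) (hr : 1 ≤ r) (ha : 0 ≤ a) (hb : 0 ≤ b) :
    r * (a ^ (r - 1) * b) ≤ (r - 1) * a ^ r + b ^ r := by
  have hr0 : 0 < r := lt_of_lt_of_le one_pos hr
  rcases eq_or_lt_of_le hr with h | h
  · simp [← h]
  · have hr1 : 0 < r - 1 := by linarith
    have hpq : Real.HolderConjugate (r / (r - 1)) r := by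
      rw [Real.holderConjugate_iff]; constructor
      · rw [lt_div_iff₀ hr1]; linarith
      · field_simp; ring
    have key := Real.young_inequality_of_nonneg (Real.rpow_nonneg ha (r - 1)) hb hpq
    rw [← Real.rpow_mul ha, show (r - 1) * (r / (r - 1)) = r by field_simp] at key
    have := mul_le_mul_of_nonneg_left key hr0.le
    have q1 : r * (a ^ r / (r / (r - 1))) = (r - 1) * a ^ r := by
      field_simp
    have q2 : r * (b ^ r / r) = b ^ r := by field_simp
    rw [mul_add, q1, q2] at this
    linarith

lemma rpow_succ_aux (r a : ℝ) (hr : 1 ≤ r) (ha : 0 ≤ a) :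
    a ^ (r - 1) * a = a ^ r := by
  rcases eq_or_lt_of_le ha with h | h
  · rcases eq_or_lt_of_le hr with h1 | h1
    · simp [← h, ← h1]
    · rw [← h, Real.zero_rpow (by linarith), Real.zero_rpow (by linarith)]; ring
  · have : a ^ (r - 1) * a ^ (1 : ℝ) = a ^ r := by
      rw [← Real.rpow_add h]; norm_num
    simpa using this

/-- for `r ≥ 1` and nonnegative reals `u, ũ, v, ṽ`,
`(v u^{r-1} - ṽ ũ^{r-1})(u - ũ) ≥ (1/r)(u^r - ũ^r)(v - ṽ)`
(real powers, with the convention `0^0 = 1`, which is `Real.rpow`'s). -/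
theorem young_type_inequality (r u ut v vt : ℝ) (hr : 1 ≤ r)
    (hu : 0 ≤ u) (hut : 0 ≤ ut) (hv : 0 ≤ v) (hvt : 0 ≤ vt) :
    (1 / r) * (u ^ r - ut ^ r) * (v - vt) ≤
      (v * u ^ (r - 1) - vt * ut ^ (r - 1)) * (u - ut) := by
  have hr0 : 0 < r := lt_of_lt_of_le one_pos hr
  have h1 := young_aux r u ut hr hu hut
  have h2 := young_aux r ut u hr hut hu
  have e1 := rpow_succ_aux r u hr hu
  have e2 := rpow_succ_aux r ut hr hut
  rw [div_mul_eq_mul_div, div_mul_eq_mul_div, div_le_iff₀ hr0, one_mul]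
  have f1 : v * (r * (u ^ (r - 1) * u)) = v * (r * u ^ r) := by rw [e1]
  have f2 : vt * (r * (ut ^ (r - 1) * ut)) = vt * (r * ut ^ r) := by rw [e2]
  nlinarith [mul_le_mul_of_nonneg_left h1 hv, mul_le_mul_of_nonneg_left h2 hvt, f1, f2]
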